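/- Let A be an n×n matrix with entries in {0,1} such that per(A) ≠ 0, and let r_i ≠ 0 be the number of ones in the i-th row (i = 1, …, n). Then for every α ≥ 1: ln_α(per(A)) ≤ Σ_{i=1}^n (1/r_i) Σ_{j=1}^{r_i} ln_α(j). -/

import Mathlib

open Finset

/-- The α-logarithm: `ln_α(ξ) = (ξ^(1-α) - 1)/(1-α)` for `α ≠ 1`, and `ln ξ` for `α = 1`. -/
noncomputable def alphaLog (α ξ : ℝ) : ℝ :=
  if α = 1 then Real.log ξ else (ξ ^ (1 - α) - 1) / (1 - α)

/-- The Tsallis–Havrda–Charvát entropy of order `α` of a pmf `p` on a finite set. -/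
noncomputable def thc (α : ℝ) {S : Type*} [Fintype S] (p : S → ℝ) : ℝ :=
  if α = 1 then -∑ s, p s * Real.log (p s)
  else ((∑ s, p s ^ α) - 1) / (1 - α)

/-- The binary THC entropy `h_α(q)`. -/
noncomputable def binThc (α q : ℝ) : ℝ :=
  if α = 1 then -(q * Real.log q) - (1 - q) * Real.log (1 - q)
  else (q ^ α + (1 - q) ^ α - 1) / (1 - α)

/-- First conditional THC entropy (Daróczy form): `H_α(X|Y) = Σ_y p(y)^α H_α(X|y)`,
where `p` is the joint pmf of `(X, Y)`.  (Terms with `p(y) = 0` vanish for `α > 0`.) -/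
noncomputable def condThc1 (α : ℝ) {SX SY : Type*} [Fintype SX] [Fintype SY]
    (p : SX × SY → ℝ) : ℝ :=
  ∑ y, (∑ x, p (x, y)) ^ α * thc α (fun x => p (x, y) / ∑ x', p (x', y))

/-- Second conditional THC entropy: `H̃_α(X|Y) = Σ_y p(y) H_α(X|y)`,
where `p` is the joint pmf of `(X, Y)`.  (Terms with `p(y) = 0` vanish.) -/
noncomputable def condThc2 (α : ℝ) {SX SY : Type*} [Fintype SX] [Fintype SY]
    (p : SX × SY → ℝ) : ℝ :=
  ∑ y, (∑ x, p (x, y)) * thc α (fun x => p (x, y) / ∑ x', p (x', y))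

/-- The pmf of a random variable `X` defined on a finite sample space with pmf `μ`. -/
noncomputable def distOf {Ω S : Type*} [Fintype Ω] [DecidableEq S]
    (μ : Ω → ℝ) (X : Ω → S) : S → ℝ :=
  fun s => ∑ ω ∈ Finset.univ.filter (fun ω => X ω = s), μ ω


/-- The permanent of a square real matrix. -/
noncomputable def matPerm {n : ℕ} (A : Matrix (Fin n) (Fin n) ℝ) : ℝ :=
  ∑ σ : Equiv.Perm (Fin n), ∏ i, A i (σ i)


set_option maxHeartbeats 1000000


lemma alphaLog_one (α : ℝ) : alphaLog α 1 = 0 := by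
  unfold alphaLog; split <;> simp [Real.one_rpow]

lemma rpow_convex_nonpos {x y a b c : ℝ} (hx : 0 < x) (hy : 0 < y)
    (ha : 0 ≤ a) (hb : 0 ≤ b) (hab : a + b = 1) (hc : c ≤ 0) :
    (a * x + b * y) ^ c ≤ a * x ^ c + b * y ^ c := by
  have h1 : x ^ a * y ^ b ≤ a * x + b * y :=
    Real.geom_mean_le_arith_mean2_weighted ha hb hx.le hy.le hab
  have hgm : 0 < x ^ a * y ^ b := by positivity
  have h2 : (a * x + b * y) ^ c ≤ (x ^ a * y ^ b) ^ c :=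
    Real.rpow_le_rpow_of_nonpos hgm h1 hc
  have h3 : (x ^ a * y ^ b) ^ c = (x ^ c) ^ a * (y ^ c) ^ b := by
    rw [Real.mul_rpow (by positivity) (by positivity),
      ← Real.rpow_mul hx.le, ← Real.rpow_mul hy.le, ← Real.rpow_mul hx.le,
      ← Real.rpow_mul hy.le, mul_comm a c, mul_comm b c]
  calc (a * x + b * y) ^ c ≤ (x ^ a * y ^ b) ^ c := h2
    _ = (x ^ c) ^ a * (y ^ c) ^ b := h3
    _ ≤ a * x ^ c + b * y ^ c :=
        Real.geom_mean_le_arith_mean2_weighted ha hb (by positivity) (by positivity) hab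

lemma rpow_smooth {a b c : ℝ} (ha : 1 ≤ a) (hb : 1 ≤ b) (hc : c ≤ 0) :
    a ^ c + b ^ c ≤ 1 + (a + b - 1) ^ c := by
  have ha0 : (0:ℝ) < a := lt_of_lt_of_le one_pos ha
  have hb0 : (0:ℝ) < b := lt_of_lt_of_le one_pos hb
  have hs0 : (0:ℝ) < a + b - 1 := by linarith
  have hfac : a + b - 1 = a * (1 + (b - 1) / a) := by
    rw [mul_add, mul_one, mul_div_cancel₀ _ ha0.ne']; ring
  have hq1 : (1:ℝ) ≤ 1 + (b - 1) / a := by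
    have : 0 ≤ (b - 1) / a := div_nonneg (by linarith) ha0.le
    linarith
  have hqb : 1 + (b - 1) / a ≤ b := by
    have h1 : (b - 1) / a ≤ b - 1 := div_le_self (by linarith) ha
    linarith
  have key : a ^ c - (a + b - 1) ^ c ≤ 1 - b ^ c := by
    have e1 : (a + b - 1) ^ c = a ^ c * (1 + (b - 1) / a) ^ c := by
      rw [hfac, Real.mul_rpow ha0.le (by linarith)]
    have h2 : b ^ c ≤ (1 + (b - 1) / a) ^ c :=
      Real.rpow_le_rpow_of_nonpos (by linarith) hqb hc
    have h3 : (1 + (b - 1) / a) ^ c ≤ 1 :=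
      Real.rpow_le_one_of_one_le_of_nonpos hq1 hc
    have h4 : a ^ c ≤ 1 := Real.rpow_le_one_of_one_le_of_nonpos ha hc
    have h5 : 0 < a ^ c := Real.rpow_pos_of_pos ha0 c
    have e2 : a ^ c - (a + b - 1) ^ c = a ^ c * (1 - (1 + (b - 1) / a) ^ c) := by
      rw [e1]; ring
    rw [e2]
    calc a ^ c * (1 - (1 + (b - 1) / a) ^ c) ≤ 1 * (1 - (1 + (b - 1) / a) ^ c) :=
          mul_le_mul_of_nonneg_right h4 (by linarith)
      _ = 1 - (1 + (b - 1) / a) ^ c := one_mul _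
      _ ≤ 1 - b ^ c := by linarith
  linarith

lemma sum_rpow_smooth {ι : Type*} {c : ℝ} (hc : c ≤ 0) (V : Finset ι) (hV : V.Nonempty)
    (w : ι → ℝ) (hw : ∀ v ∈ V, 1 ≤ w v) :
    ∑ v ∈ V, (w v) ^ c ≤ ((V.card : ℝ) - 1) + ((∑ v ∈ V, w v) - V.card + 1) ^ c := by
  revert hw
  induction hV using Finset.Nonempty.cons_induction with
  | singleton v => intro hw; simp
  | cons v0 V hv0 hVne ih =>
    intro hw
    have hw' : ∀ v ∈ V, 1 ≤ w v := fun v hv => hw v (Finset.mem_cons_of_mem hv)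
    have hw0 : 1 ≤ w v0 := hw v0 (Finset.mem_cons_self _ _)
    have hM : (V.card : ℝ) ≤ ∑ v ∈ V, w v := by
      calc (V.card : ℝ) = ∑ _v ∈ V, (1:ℝ) := by simp
        _ ≤ ∑ v ∈ V, w v := Finset.sum_le_sum hw'
    have ih' := ih hw'
    rw [Finset.sum_cons, Finset.sum_cons, Finset.card_cons]
    have hsm : w v0 ^ c + ((∑ v ∈ V, w v) - V.card + 1) ^ c ≤
        1 + (w v0 + ((∑ v ∈ V, w v) - V.card + 1) - 1) ^ c :=
      rpow_smooth hw0 (by linarith) hc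
    have heq : w v0 + ((∑ v ∈ V, w v) - V.card + 1) - 1
        = (w v0 + ∑ v ∈ V, w v) - (↑(V.card + 1) : ℝ) + 1 := by
      push_cast; ring
    rw [heq] at hsm
    push_cast at hsm ⊢
    linarith

/-- Key analytic lemma ("entropy ≤ ln_α of alphabet size", grouping form). -/
lemma K_real {ι : Type*} {α : ℝ} (hα : 1 ≤ α) (V : Finset ι) (hV : V.Nonempty)
    (w : ι → ℝ) (hw : ∀ v ∈ V, 1 ≤ w v) :
    alphaLog α (∑ v ∈ V, w v) ≤ alphaLog α V.card +
      ∑ v ∈ V, (w v / ∑ v' ∈ V, w v') * alphaLog α (w v) := by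
  by_cases hd : V.card = 1
  · obtain ⟨v, rfl⟩ := Finset.card_eq_one.mp hd
    have hwv : (0:ℝ) < w v := lt_of_lt_of_le one_pos (hw v (Finset.mem_singleton_self v))
    simp [alphaLog_one, div_self hwv.ne']
  -- setup
  have hcard : 2 ≤ V.card := by
    have h0 : V.card ≠ 0 := hV.card_pos.ne'
    omega
  obtain ⟨N, hN⟩ : ∃ x : ℝ, x = ∑ v ∈ V, w v := ⟨_, rfl⟩
  obtain ⟨D, hD⟩ : ∃ x : ℝ, x = (V.card : ℝ) := ⟨_, rfl⟩
  rw [← hN, ← hD]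
  have hD2 : (2:ℝ) ≤ D := by rw [hD]; exact_mod_cast hcard
  have hD0 : 0 < D := by linarith
  have hDN : D ≤ N := by
    rw [hD, hN]
    calc ((V.card : ℝ)) = ∑ _v ∈ V, (1:ℝ) := by simp
      _ ≤ ∑ v ∈ V, w v := Finset.sum_le_sum hw
  have hN1 : (1:ℝ) < N := by linarith
  have hN0 : (0:ℝ) < N := by linarith
  have hwpos : ∀ v ∈ V, 0 < w v := fun v hv => lt_of_lt_of_le one_pos (hw v hv)
  have hq1 : ∑ v ∈ V, w v / N = 1 := by
    rw [← Finset.sum_div, ← hN]; exact div_self hN0.ne'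
  by_cases hα1 : α = 1
  · -- Shannon case
    subst hα1
    simp only [alphaLog, eq_self_iff_true, if_true]
    have key : ∀ v ∈ V, (w v / N) * (Real.log N - Real.log D - Real.log (w v))
        ≤ 1 / D - w v / N := by
      intro v hv
      have hwv := hwpos v hv
      have hlog : Real.log N - Real.log D - Real.log (w v)
          = Real.log (N / (D * w v)) := by
        rw [Real.log_div hN0.ne' (by positivity), Real.log_mul hD0.ne' hwv.ne']
        ring
      have hle : Real.log (N / (D * w v)) ≤ N / (D * w v) - 1 :=
        Real.log_le_sub_one_of_pos (by positivity)
      have hq0 : 0 ≤ w v / N := by positivity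
      calc (w v / N) * (Real.log N - Real.log D - Real.log (w v))
          = (w v / N) * Real.log (N / (D * w v)) := by rw [hlog]
        _ ≤ (w v / N) * (N / (D * w v) - 1) := mul_le_mul_of_nonneg_left hle hq0
        _ = 1 / D - w v / N := by field_simp
    have hsum := Finset.sum_le_sum key
    have e1 : ∑ v ∈ V, (w v / N) * (Real.log N - Real.log D - Real.log (w v))
        = (Real.log N - Real.log D) - ∑ v ∈ V, (w v / N) * Real.log (w v) := by
      calc ∑ v ∈ V, (w v / N) * (Real.log N - Real.log D - Real.log (w v))
          = ∑ v ∈ V, ((w v / N) * (Real.log N - Real.log D)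
              - (w v / N) * Real.log (w v)) := by
            apply Finset.sum_congr rfl; intro v hv; ring
        _ = (∑ v ∈ V, (w v / N)) * (Real.log N - Real.log D)
              - ∑ v ∈ V, (w v / N) * Real.log (w v) := by
            rw [Finset.sum_sub_distrib, Finset.sum_mul]
        _ = (Real.log N - Real.log D) - ∑ v ∈ V, (w v / N) * Real.log (w v) := by
            rw [hq1, one_mul]
    have e2 : ∑ v ∈ V, (1 / D - w v / N) = 0 := by
      rw [Finset.sum_sub_distrib, hq1, Finset.sum_const, nsmul_eq_mul, ← hD]
      field_simp
      norm_num
    rw [e1, e2] at hsum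
    linarith
  · -- α > 1
    have hαgt : 1 < α := lt_of_le_of_ne hα (Ne.symm hα1)
    obtain ⟨c, hc⟩ : ∃ x : ℝ, x = 1 - α := ⟨_, rfl⟩
    have hc0 : c < 0 := by rw [hc]; linarith
    simp only [alphaLog, if_neg hα1]
    rw [← hc]
    -- key inequality (**): T ≤ 1 + N^c - D^c
    have hDc0 : (0:ℝ) < D ^ c := Real.rpow_pos_of_pos hD0 c
    have hNc0 : (0:ℝ) < N ^ c := Real.rpow_pos_of_pos hN0 c
    have hNcDc : N ^ c ≤ D ^ c := Real.rpow_le_rpow_of_nonpos hD0 hDN hc0.le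
    have key : ∑ v ∈ V, (w v / N) * (w v) ^ c ≤ 1 + N ^ c - D ^ c := by
      rcases le_total (-1 : ℝ) c with hcase | hcase
      · -- -1 ≤ c < 0
        obtain ⟨e, he⟩ : ∃ x : ℝ, x = 1 + c := ⟨_, rfl⟩
        have he0 : 0 ≤ e := by rw [he]; linarith
        have he1 : 1 - e = -c := by rw [he]; ring
        have pointwise : ∀ v ∈ V, (w v / N) * (w v) ^ c = N ^ c * (w v / N) ^ e := by
          intro v hv
          have hwv := hwpos v hv
          have : (w v / N) ^ e = (w v / N) * ((w v) ^ c / N ^ c) := by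
            rw [he, Real.rpow_add (div_pos hwv hN0), Real.rpow_one,
              Real.div_rpow hwv.le hN0.le]
          rw [this]; field_simp
        have am : ∀ v ∈ V, (w v / N) ^ e ≤ (e * (D * (w v / N)) + (1 - e)) / D ^ e := by
          intro v hv
          have hwv := hwpos v hv
          have hq0 : 0 < w v / N := div_pos hwv hN0
          have hgm : (D * (w v / N)) ^ e * 1 ^ (1 - e) ≤ e * (D * (w v / N)) + (1 - e) * 1 := by
            apply Real.geom_mean_le_arith_mean2_weighted he0 (by linarith [hc0]) (by positivity)
              zero_le_one (by ring)
          rw [Real.one_rpow, mul_one, mul_one] at hgm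
          rw [Real.mul_rpow hD0.le hq0.le] at hgm
          have hDe0 : (0:ℝ) < D ^ e := Real.rpow_pos_of_pos hD0 e
          rw [le_div_iff₀ hDe0]
          calc (w v / N) ^ e * D ^ e = D ^ e * (w v / N) ^ e := by ring
            _ ≤ e * (D * (w v / N)) + (1 - e) := hgm
        have hsum : ∑ v ∈ V, (w v / N) ^ e ≤ D ^ (-c) := by
          calc ∑ v ∈ V, (w v / N) ^ e
              ≤ ∑ v ∈ V, (e * (D * (w v / N)) + (1 - e)) / D ^ e :=
                Finset.sum_le_sum am
            _ = (e * D * (∑ v ∈ V, w v / N) + (1 - e) * D) / D ^ e := by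
                rw [← Finset.sum_div]; congr 1
                rw [Finset.sum_add_distrib, Finset.sum_const, nsmul_eq_mul, ← Finset.mul_sum,
                  ← Finset.mul_sum, ← hD]
                ring
            _ = D / D ^ e := by rw [hq1]; congr 1; ring
            _ = D ^ (-c) := by
                rw [show (-c : ℝ) = 1 - e by rw [he]; ring, Real.rpow_sub hD0, Real.rpow_one]
        have : ∑ v ∈ V, (w v / N) * (w v) ^ c = N ^ c * ∑ v ∈ V, (w v / N) ^ e := by
          rw [Finset.mul_sum]; exact Finset.sum_congr rfl pointwise
        rw [this]
        have hstep : N ^ c * ∑ v ∈ V, (w v / N) ^ e ≤ N ^ c * D ^ (-c) :=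
          mul_le_mul_of_nonneg_left hsum hNc0.le
        have hDD : D ^ c * D ^ (-c) = 1 := by
          rw [← Real.rpow_add hD0]; simp
        have h1Dc : 1 ≤ D ^ (-c) := Real.one_le_rpow (by linarith) (by linarith)
        nlinarith [mul_nonneg (sub_nonneg.mpr hNcDc) (sub_nonneg.mpr h1Dc)]
      · -- c ≤ -1
        obtain ⟨e, he⟩ : ∃ x : ℝ, x = 1 + c := ⟨_, rfl⟩
        have he0 : e ≤ 0 := by rw [he]; linarith
        obtain ⟨lam, hlam⟩ : ∃ x : ℝ, x = (D - 1) / (N - 1) := ⟨_, rfl⟩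
        have hN1' : (0:ℝ) < N - 1 := by linarith
        have hlam0 : 0 ≤ lam := by rw [hlam]; exact div_nonneg (by linarith) hN1'.le
        have hlam1 : lam ≤ 1 := by rw [hlam]; exact (div_le_one hN1').mpr (by linarith)
        have hlamN : lam * (N - 1) = D - 1 := by rw [hlam]; exact div_mul_cancel₀ _ hN1'.ne'
        have h1 : D ^ c ≤ (1 - lam) * 1 + lam * N ^ c := by
          have := rpow_convex_nonpos one_pos hN0 (by linarith : (0:ℝ) ≤ 1 - lam) hlam0
            (by ring) hc0.le
          rw [Real.one_rpow] at this
          have harg : (1 - lam) * 1 + lam * N = D := by nlinarith [hlamN]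
          rw [harg] at this
          linarith [this]
        have h2 : (N - D + 1) ^ e ≤ (1 - lam) * N ^ e + lam * 1 := by
          have := rpow_convex_nonpos hN0 one_pos (by linarith : (0:ℝ) ≤ 1 - lam) hlam0
            (by ring) he0
          rw [Real.one_rpow] at this
          have harg : (1 - lam) * N + lam * 1 = N - D + 1 := by nlinarith [hlamN]
          rw [harg] at this
          linarith [this]
        have hsm : ∑ v ∈ V, (w v) ^ e ≤ (D - 1) + (N - D + 1) ^ e := by
          have h := sum_rpow_smooth he0 V hV w hw
          rw [← hN, ← hD] at h
          exact h
        have pointwise : ∀ v ∈ V, (w v / N) * (w v) ^ c = (w v) ^ e / N := by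
          intro v hv
          have hwv := hwpos v hv
          rw [he, Real.rpow_add hwv, Real.rpow_one]
          ring
        have hNe : N ^ e = N * N ^ c := by
          rw [he, Real.rpow_add hN0, Real.rpow_one]
        have hT : ∑ v ∈ V, (w v / N) * (w v) ^ c = (∑ v ∈ V, (w v) ^ e) / N := by
          rw [Finset.sum_div]; exact Finset.sum_congr rfl pointwise
        rw [hT]
        have lin1 : (∑ v ∈ V, (w v) ^ e) ≤ (D - 1) + ((1 - lam) * (N * N ^ c) + lam) := by
          calc ∑ v ∈ V, (w v) ^ e ≤ (D - 1) + (N - D + 1) ^ e := hsm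
            _ ≤ (D - 1) + ((1 - lam) * N ^ e + lam * 1) := by linarith [h2]
            _ = (D - 1) + ((1 - lam) * (N * N ^ c) + lam) := by rw [hNe]; ring
        have step1 : (∑ v ∈ V, (w v) ^ e) / N
            ≤ ((D - 1) + ((1 - lam) * (N * N ^ c) + lam)) / N :=
          (div_le_div_iff_of_pos_right hN0).mpr lin1
        have hRHSeq : ((D - 1) + ((1 - lam) * (N * N ^ c) + lam)) / N
            = lam + (1 - lam) * N ^ c := by
          rw [← hlamN]; field_simp; ring
        rw [hRHSeq] at step1
        linarith [h1, step1]
    -- conclude from key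
    have expand : ∑ v ∈ V, (w v / N) * (((w v) ^ c - 1) / c)
        = ((∑ v ∈ V, (w v / N) * (w v) ^ c) - 1) / c := by
      rw [eq_div_iff hc0.ne]
      rw [Finset.sum_mul]
      have : ∀ v ∈ V, (w v / N) * (((w v) ^ c - 1) / c) * c
          = (w v / N) * (w v) ^ c - (w v / N) := by
        intro v hv; rw [mul_assoc, div_mul_cancel₀ _ hc0.ne]; ring
      rw [Finset.sum_congr rfl this, Finset.sum_sub_distrib, hq1]
    rw [expand]
    have final : (D ^ c - 1) / c + ((∑ v ∈ V, (w v / N) * (w v) ^ c) - 1) / c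
        = ((D ^ c - 1) + ((∑ v ∈ V, (w v / N) * (w v) ^ c) - 1)) / c := by
      rw [← add_div]
    rw [final]
    apply div_le_div_of_nonpos_of_le hc0.le
    linarith [key]

lemma alphaLog_mono {α : ℝ} (hα : 1 ≤ α) {x y : ℝ} (hx : 0 < x) (hxy : x ≤ y) :
    alphaLog α x ≤ alphaLog α y := by
  unfold alphaLog
  split
  · exact Real.log_le_log hx hxy
  · rename_i h
    have hαgt : 1 < α := lt_of_le_of_ne hα (Ne.symm h)
    have hc : 1 - α ≤ 0 := by linarith
    have := Real.rpow_le_rpow_of_nonpos hx hxy hc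
    exact div_le_div_of_nonpos_of_le (by linarith) (by linarith)

lemma alphaLog_nat_mono {α : ℝ} (hα : 1 ≤ α) {a b : ℕ} (ha : 1 ≤ a) (hab : a ≤ b) :
    alphaLog α (a : ℝ) ≤ alphaLog α (b : ℝ) :=
  alphaLog_mono hα (by exact_mod_cast ha) (by exact_mod_cast hab)


variable {Ω β : Type*} [DecidableEq Ω] [DecidableEq β]

/-- Number of possible values of coordinate `t` among elements of `M` that agree with `σ`
on all earlier coordinates. -/
def nextCount (g : ℕ → Ω → β) (M : Finset Ω) (t : ℕ) (σ : Ω) : ℕ :=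
  ((M.filter (fun σ' => ∀ s < t, g s σ' = g s σ)).image (g t)).card

lemma claimA (L : ℕ → ℝ) (hL1 : L 1 = 0)
    (hK : ∀ (V : Finset β) (w : β → ℕ), V.Nonempty → (∀ v ∈ V, 1 ≤ w v) →
      ((∑ v ∈ V, w v : ℕ) : ℝ) * L (∑ v ∈ V, w v) ≤
        ((∑ v ∈ V, w v : ℕ) : ℝ) * L V.card + ∑ v ∈ V, (w v : ℝ) * L (w v)) :
    ∀ (m : ℕ) (g : ℕ → Ω → β) (M : Finset Ω), M.Nonempty →
      (∀ σ ∈ M, ∀ σ' ∈ M, (∀ s < m, g s σ = g s σ') → σ = σ') →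
      (M.card : ℝ) * L M.card ≤ ∑ σ ∈ M, ∑ t ∈ Finset.range m, L (nextCount g M t σ) := by
  intro m
  induction m with
  | zero =>
    intro g M hM hinj
    obtain ⟨σ0, hσ0⟩ := hM
    have hMeq : M = {σ0} := by
      apply Finset.eq_singleton_iff_unique_mem.mpr
      exact ⟨hσ0, fun σ hσ => hinj σ hσ σ0 hσ0 (fun s hs => absurd hs (Nat.not_lt_zero s))⟩
    simp [hMeq, hL1]
  | succ m ih =>
    intro g M hM hinj
    set V := M.image (g 0) with hV
    set w : β → ℕ := fun v => (M.filter (fun σ => g 0 σ = v)).card with hw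
    have hVne : V.Nonempty := hM.image _
    have hwpos : ∀ v ∈ V, 1 ≤ w v := by
      intro v hv
      obtain ⟨σ, hσ, rfl⟩ := Finset.mem_image.mp hv
      exact Finset.card_pos.mpr ⟨σ, Finset.mem_filter.mpr ⟨hσ, rfl⟩⟩
    have hsum : ∑ v ∈ V, w v = M.card :=
      (Finset.card_eq_sum_card_fiberwise (fun σ hσ => Finset.mem_image_of_mem _ hσ)).symm
    have hKV := hK V w hVne hwpos
    rw [hsum] at hKV
    -- per-class induction hypothesis
    have hclass : ∀ v ∈ V, (w v : ℝ) * L (w v) ≤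
        ∑ σ ∈ M.filter (fun σ => g 0 σ = v), ∑ t ∈ Finset.range m,
          L (nextCount (fun s => g (s+1)) (M.filter (fun σ => g 0 σ = v)) t σ) := by
      intro v hv
      apply ih (fun s => g (s+1)) (M.filter (fun σ => g 0 σ = v))
      · obtain ⟨σ, hσ, rfl⟩ := Finset.mem_image.mp hv
        exact ⟨σ, Finset.mem_filter.mpr ⟨hσ, rfl⟩⟩
      · intro σ hσ σ' hσ' hagree
        obtain ⟨hσM, hσv⟩ := Finset.mem_filter.mp hσ
        obtain ⟨hσ'M, hσ'v⟩ := Finset.mem_filter.mp hσ'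
        apply hinj σ hσM σ' hσ'M
        intro s hs
        match s with
        | 0 => rw [hσv, hσ'v]
        | s+1 => exact hagree s (by omega)
    -- rewriting nextCount across the shift
    have hshift : ∀ v ∈ V, ∀ σ ∈ M.filter (fun σ => g 0 σ = v), ∀ t,
        nextCount (fun s => g (s+1)) (M.filter (fun σ => g 0 σ = v)) t σ
          = nextCount g M (t+1) σ := by
      intro v hv σ hσ t
      obtain ⟨hσM, hσv⟩ := Finset.mem_filter.mp hσ
      unfold nextCount
      congr 1
      congr 1
      rw [Finset.filter_filter]
      apply Finset.filter_congr
      intro σ' _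
      constructor
      · rintro ⟨h0, hrest⟩ s hs
        match s with
        | 0 => rw [h0, hσv]
        | s+1 => exact hrest s (by omega)
      · intro h
        refine ⟨by rw [h 0 (Nat.succ_pos _), hσv], fun s hs => h (s+1) (by omega)⟩
    -- first coordinate count is the number of classes
    have hfirst : ∀ σ ∈ M, nextCount g M 0 σ = V.card := by
      intro σ hσ
      unfold nextCount
      congr 2
      apply Finset.filter_true_of_mem
      intro σ' _
      intro s hs
      exact absurd hs (Nat.not_lt_zero s)
    -- assemble
    calc (M.card : ℝ) * L M.card
        ≤ (M.card : ℝ) * L V.card + ∑ v ∈ V, (w v : ℝ) * L (w v) := hKV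
      _ ≤ (M.card : ℝ) * L V.card + ∑ v ∈ V, ∑ σ ∈ M.filter (fun σ => g 0 σ = v),
            ∑ t ∈ Finset.range m, L (nextCount (fun s => g (s+1))
              (M.filter (fun σ => g 0 σ = v)) t σ) := by
          gcongr with v hv
          exact hclass v hv
      _ = (M.card : ℝ) * L V.card + ∑ v ∈ V, ∑ σ ∈ M.filter (fun σ => g 0 σ = v),
            ∑ t ∈ Finset.range m, L (nextCount g M (t+1) σ) := by
          congr 1
          apply Finset.sum_congr rfl
          intro v hv
          apply Finset.sum_congr rfl
          intro σ hσ
          apply Finset.sum_congr rfl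
          intro t _
          rw [hshift v hv σ hσ t]
      _ = (M.card : ℝ) * L V.card + ∑ σ ∈ M, ∑ t ∈ Finset.range m,
            L (nextCount g M (t+1) σ) := by
          congr 1
          exact Finset.sum_fiberwise_of_maps_to (fun σ hσ => Finset.mem_image_of_mem _ hσ) _
      _ = ∑ σ ∈ M, (L (nextCount g M 0 σ) + ∑ t ∈ Finset.range m,
            L (nextCount g M (t+1) σ)) := by
          rw [Finset.sum_add_distrib]
          congr 1
          rw [Finset.sum_congr rfl (fun σ hσ => by rw [hfirst σ hσ]), Finset.sum_const,
            nsmul_eq_mul]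
      _ = ∑ σ ∈ M, ∑ t ∈ Finset.range (m+1), L (nextCount g M t σ) := by
          apply Finset.sum_congr rfl
          intro σ _
          rw [Finset.sum_range_succ']
          ring


variable {n : ℕ}

/-- The ranks of elements of `R` (number of elements of `R` at or above them in the order
induced by `p`) enumerate `{1, …, |R|}`. -/
lemma rank_image (R : Finset (Fin n)) (p : Equiv.Perm (Fin n)) (f : ℕ → ℝ) :
    ∑ j ∈ R, f ((R.filter (fun u => p j ≤ p u)).card) = ∑ k ∈ Finset.Icc 1 R.card, f k := by
  set φ : Fin n → ℕ := fun j => (R.filter (fun u => p j ≤ p u)).card with hφ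
  have hanti : ∀ j ∈ R, ∀ j' ∈ R, p j < p j' → φ j' < φ j := by
    intro j hj j' hj' hlt
    apply Finset.card_lt_card
    constructor
    · intro u hu
      obtain ⟨huR, hle⟩ := Finset.mem_filter.mp hu
      exact Finset.mem_filter.mpr ⟨huR, le_trans hlt.le hle⟩
    · intro hsub
      have hjmem : j ∈ R.filter (fun u => p j ≤ p u) := Finset.mem_filter.mpr ⟨hj, le_refl _⟩
      have := Finset.mem_filter.mp (hsub hjmem)
      exact absurd this.2 (not_le.mpr hlt)
  have hinj : Set.InjOn φ R := by
    intro j hj j' hj' heq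
    by_contra hne
    have hpne : p j ≠ p j' := fun h => hne (p.injective h)
    rcases lt_or_gt_of_ne hpne with h | h
    · exact absurd heq (by have := hanti j hj j' hj' h; omega)
    · exact absurd heq (by have := hanti j' hj' j hj h; omega)
  have himage : R.image φ = Finset.Icc 1 R.card := by
    apply Finset.eq_of_subset_of_card_le
    · intro k hk
      obtain ⟨j, hj, rfl⟩ := Finset.mem_image.mp hk
      refine Finset.mem_Icc.mpr ⟨?_, ?_⟩
      · exact Finset.card_pos.mpr ⟨j, Finset.mem_filter.mpr ⟨hj, le_refl _⟩⟩
      · exact Finset.card_le_card (Finset.filter_subset _ _)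
    · rw [Nat.card_Icc, Finset.card_image_of_injOn hinj]
      omega
  rw [← himage, Finset.sum_image (fun x hx y hy h => hinj hx hy h)]

lemma swap_mem_of_mem {i j u : Fin n} {R : Finset (Fin n)} (hi : i ∈ R) (hj : j ∈ R)
    (hu : u ∈ R) : Equiv.swap i j u ∈ R := by
  rcases eq_or_ne u i with rfl | hui
  · rw [Equiv.swap_apply_left]; exact hj
  rcases eq_or_ne u j with rfl | huj
  · rw [Equiv.swap_apply_right]; exact hi
  · rw [Equiv.swap_apply_of_ne_of_ne hui huj]; exact hu

lemma rank_sym (R : Finset (Fin n)) {i j : Fin n} (hi : i ∈ R) (hj : j ∈ R) (f : ℕ → ℝ) :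
    ∑ p : Equiv.Perm (Fin n), f ((R.filter (fun u => p i ≤ p u)).card)
      = ∑ p : Equiv.Perm (Fin n), f ((R.filter (fun u => p j ≤ p u)).card) := by
  set τ := Equiv.swap i j with hτ
  apply Fintype.sum_equiv (Equiv.mulRight τ)
  intro p
  have hcard : (R.filter (fun u => (p * τ) j ≤ (p * τ) u)).card
      = (R.filter (fun u => p i ≤ p u)).card := by
    apply Finset.card_bij' (fun u _ => τ u) (fun u _ => τ u)
    · intro u hu
      obtain ⟨huR, hle⟩ := Finset.mem_filter.mp hu
      refine Finset.mem_filter.mpr ⟨swap_mem_of_mem hi hj huR, ?_⟩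
      simpa [hτ, Equiv.Perm.mul_apply, Equiv.swap_apply_right] using hle
    · intro u hu
      obtain ⟨huR, hle⟩ := Finset.mem_filter.mp hu
      refine Finset.mem_filter.mpr ⟨swap_mem_of_mem hi hj huR, ?_⟩
      simpa [hτ, Equiv.Perm.mul_apply, Equiv.swap_apply_right, Equiv.swap_apply_self] using hle
    · intro u _; simp [hτ]
    · intro u _; simp [hτ]
  simp only [Equiv.coe_mulRight]
  exact congrArg f hcard.symm

lemma countL (R : Finset (Fin n)) {i : Fin n} (hi : i ∈ R) (f : ℕ → ℝ) :
    (R.card : ℝ) * ∑ p : Equiv.Perm (Fin n), f ((R.filter (fun u => p i ≤ p u)).card)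
      = (Fintype.card (Equiv.Perm (Fin n)) : ℝ) * ∑ k ∈ Finset.Icc 1 R.card, f k := by
  calc (R.card : ℝ) * ∑ p : Equiv.Perm (Fin n), f ((R.filter (fun u => p i ≤ p u)).card)
      = ∑ j ∈ R, ∑ p : Equiv.Perm (Fin n), f ((R.filter (fun u => p j ≤ p u)).card) := by
        rw [Finset.sum_congr rfl (fun j hj => (rank_sym R hj hi f)), Finset.sum_const,
          nsmul_eq_mul]
    _ = ∑ p : Equiv.Perm (Fin n), ∑ j ∈ R, f ((R.filter (fun u => p j ≤ p u)).card) :=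
        Finset.sum_comm
    _ = ∑ _p : Equiv.Perm (Fin n), ∑ k ∈ Finset.Icc 1 R.card, f k :=
        Finset.sum_congr rfl (fun p _ => rank_image R p f)
    _ = (Fintype.card (Equiv.Perm (Fin n)) : ℝ) * ∑ k ∈ Finset.Icc 1 R.card, f k := by
        rw [Finset.sum_const, nsmul_eq_mul, Fintype.card]



lemma one_le_nextCount (g : ℕ → Ω → β) (M : Finset Ω) (t : ℕ) {σ : Ω} (hσ : σ ∈ M) :
    1 ≤ nextCount g M t σ :=
  Finset.card_pos.mpr ⟨g t σ, Finset.mem_image_of_mem _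
    (Finset.mem_filter.mpr ⟨hσ, fun _ _ => rfl⟩)⟩

/-- The number of rows `s ≥ t` (in the order given by `π`) whose `σ`-matched column is a
one of row `π t`. -/
noncomputable def rnkCount {n : ℕ} (A : Matrix (Fin n) (Fin n) ℝ) (σ π : Equiv.Perm (Fin n)) (t : Fin n) : ℕ :=
  (Finset.univ.filter (fun s : Fin n => t ≤ s ∧ A (π t) (σ (π s)) = 1)).card

lemma nextCount_le_rnkCount {n : ℕ} (hn : 0 < n) (A : Matrix (Fin n) (Fin n) ℝ)
    (M : Finset (Equiv.Perm (Fin n))) (hM : ∀ σ ∈ M, ∀ u, A u (σ u) = 1)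
    (π σ : Equiv.Perm (Fin n)) (hσ : σ ∈ M) (t : Fin n) :
    nextCount (fun s τ => τ (π ⟨s % n, Nat.mod_lt s hn⟩)) M t.val σ ≤ rnkCount A σ π t := by
  classical
  unfold nextCount rnkCount
  set e : Fin n ≃ Fin n := π.trans σ with he
  set T : Finset (Fin n) := Finset.univ.filter (fun s : Fin n => s < t) with hT
  set D : Finset (Fin n) :=
    (Finset.univ.filter (fun j => A (π t) j = 1)) \ (T.image e) with hD
  have hsub : ((M.filter (fun σ' => ∀ s < t.val,
      σ' (π ⟨s % n, Nat.mod_lt s hn⟩) = σ (π ⟨s % n, Nat.mod_lt s hn⟩))).image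
        (fun τ => τ (π ⟨t.val % n, Nat.mod_lt t.val hn⟩))) ⊆ D := by
    intro j hj
    obtain ⟨σ', hσ'C, rfl⟩ := Finset.mem_image.mp hj
    obtain ⟨hσ'M, hagree⟩ := Finset.mem_filter.mp hσ'C
    have htmk : (⟨t.val % n, Nat.mod_lt t.val hn⟩ : Fin n) = t := by
      apply Fin.ext; simp [Nat.mod_eq_of_lt t.isLt]
    rw [htmk]
    rw [hD, Finset.mem_sdiff]
    constructor
    · exact Finset.mem_filter.mpr ⟨Finset.mem_univ _, hM σ' hσ'M (π t)⟩
    · intro hmem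
      obtain ⟨s, hsT, heq⟩ := Finset.mem_image.mp hmem
      have hst : s < t := (Finset.mem_filter.mp hsT).2
      have hsval : s.val < t.val := hst
      have hsmk : (⟨s.val % n, Nat.mod_lt s.val hn⟩ : Fin n) = s := by
        apply Fin.ext; simp [Nat.mod_eq_of_lt s.isLt]
      have hag := hagree s.val hsval
      rw [hsmk] at hag
      -- e s = σ' (π t); also e s = σ (π s) = σ' (π s)
      have : σ' (π s) = σ' (π t) := by
        rw [hag, ← heq, he]; rfl
      have hps : π s = π t := σ'.injective this
      have : s = t := π.injective hps
      exact absurd (this ▸ hst) (lt_irrefl t)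
  have hcardD : D.card = (Finset.univ.filter
      (fun s : Fin n => t ≤ s ∧ A (π t) (σ (π s)) = 1)).card := by
    have hones : (Finset.univ.filter (fun j => A (π t) j = 1))
        = (Finset.univ.filter (fun s : Fin n => A (π t) (e s) = 1)).image e := by
      ext j
      simp only [Finset.mem_filter, Finset.mem_univ, true_and, Finset.mem_image]
      constructor
      · intro hj
        exact ⟨e.symm j, by rw [Equiv.apply_symm_apply]; exact hj, Equiv.apply_symm_apply e j⟩
      · rintro ⟨s, hs, rfl⟩; exact hs
    rw [hD, hones, ← Finset.image_sdiff _ _ e.injective,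
      Finset.card_image_of_injective _ e.injective]
    congr 1
    ext s
    simp only [Finset.mem_sdiff, Finset.mem_filter, Finset.mem_univ, true_and, hT, not_lt, he,
      Equiv.trans_apply]
    tauto
  calc ((M.filter _).image _).card ≤ D.card := Finset.card_le_card hsub
    _ = _ := hcardD


lemma rnk_eq {n : ℕ} (A : Matrix (Fin n) (Fin n) ℝ) (σ π : Equiv.Perm (Fin n)) (i : Fin n) :
    rnkCount A σ π (π.symm i) =
      (((Finset.univ.filter (fun u => A i (σ u) = 1))).filter
        (fun u => π.symm i ≤ π.symm u)).card := by
  unfold rnkCount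
  rw [Equiv.apply_symm_apply]
  apply Finset.card_bij' (fun s _ => π s) (fun u _ => π.symm u)
  · intro s hs
    obtain ⟨-, hle, hA⟩ : s ∈ Finset.univ ∧ π.symm i ≤ s ∧ A i (σ (π s)) = 1 := by
      simpa [Finset.mem_filter] using hs
    simp only [Finset.mem_filter, Finset.mem_univ, true_and, Equiv.symm_apply_apply]
    exact ⟨hA, hle⟩
  · intro u hu
    obtain ⟨hA, hle⟩ : (u ∈ Finset.univ ∧ A i (σ u) = 1) ∧ π.symm i ≤ π.symm u := by
      simpa [Finset.mem_filter] using hu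
    simp only [Finset.mem_filter, Finset.mem_univ, true_and, Equiv.apply_symm_apply]
    exact ⟨hle, hA.2⟩
  · intro s _; simp
  · intro u _; simp


/-- Let `A` be an `n×n` `(0,1)`-matrix with `per(A) ≠ 0` and let
`r i ≠ 0` be the number of ones in row `i`.  For every `α ≥ 1`:
`ln_α (per A) ≤ Σ_i (1/r_i) Σ_{j=1}^{r_i} ln_α j`. -/
theorem alphaLog_permanent_le (n : ℕ) (A : Matrix (Fin n) (Fin n) ℝ)
    (h01 : ∀ i j, A i j = 0 ∨ A i j = 1)
    (hper : matPerm A ≠ 0)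
    (r : Fin n → ℕ)
    (hr : ∀ i, r i = (Finset.univ.filter (fun j => A i j = 1)).card)
    (hr0 : ∀ i, r i ≠ 0)
    (α : ℝ) (hα : 1 ≤ α) :
    alphaLog α (matPerm A) ≤
      ∑ i, (1 / (r i : ℝ)) * ∑ j ∈ Finset.Icc 1 (r i), alphaLog α (j : ℝ) := by
  classical
  set M : Finset (Equiv.Perm (Fin n)) :=
    Finset.univ.filter (fun σ => ∀ u, A u (σ u) = 1) with hMdef
  have hMmem : ∀ σ, σ ∈ M ↔ ∀ u, A u (σ u) = 1 := by
    intro σ; rw [hMdef, Finset.mem_filter]; simp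
  have hperm : matPerm A = (M.card : ℝ) := by
    rw [matPerm, hMdef, ← Finset.sum_boole]
    apply Finset.sum_congr rfl
    intro σ _
    by_cases h : ∀ u, A u (σ u) = 1
    · rw [if_pos h]
      exact Finset.prod_eq_one (fun u _ => h u)
    · rw [if_neg h]
      push_neg at h
      obtain ⟨u, hu⟩ := h
      exact Finset.prod_eq_zero (Finset.mem_univ u) ((h01 u (σ u)).resolve_right hu)
  have hMne : M.Nonempty := by
    rw [← Finset.card_pos]
    rcases Nat.eq_zero_or_pos M.card with h0 | h
    · exfalso; apply hper; rw [hperm, h0]; norm_num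
    · exact h
  rcases Nat.eq_zero_or_pos n with rfl | hn
  · have h1 : matPerm A = 1 := by
      rw [matPerm]
      simp
    rw [h1, alphaLog_one]
    simp
  -- the abstract grouping inequality, instantiated
  have hKnat : ∀ (V : Finset (Fin n)) (w : Fin n → ℕ), V.Nonempty → (∀ v ∈ V, 1 ≤ w v) →
      ((∑ v ∈ V, w v : ℕ) : ℝ) * alphaLog α ((∑ v ∈ V, w v : ℕ) : ℝ) ≤
        ((∑ v ∈ V, w v : ℕ) : ℝ) * alphaLog α (V.card : ℝ)
          + ∑ v ∈ V, (w v : ℝ) * alphaLog α (w v : ℝ) := by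
    intro V w hV hw
    have hw' : ∀ v ∈ V, (1:ℝ) ≤ (w v : ℝ) := fun v hv => by exact_mod_cast hw v hv
    have hKr := K_real hα V hV (fun v => (w v : ℝ)) hw'
    have hScast : ((∑ v ∈ V, w v : ℕ) : ℝ) = ∑ v ∈ V, (w v : ℝ) := by push_cast; rfl
    have hS0 : (0:ℝ) < ∑ v ∈ V, (w v : ℝ) := by
      obtain ⟨v, hv⟩ := hV
      have hnn : ∀ v ∈ V, (0:ℝ) ≤ (w v : ℝ) := fun v hv => le_trans zero_le_one (hw' v hv)
      calc (0:ℝ) < 1 := one_pos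
        _ ≤ (w v : ℝ) := hw' v hv
        _ ≤ ∑ v ∈ V, (w v : ℝ) := Finset.single_le_sum hnn hv
    have hSne : (∑ v ∈ V, (w v : ℝ)) ≠ 0 := hS0.ne'
    rw [hScast]
    have h2 := mul_le_mul_of_nonneg_left hKr hS0.le
    rw [mul_add, Finset.mul_sum] at h2
    refine le_trans h2 (le_of_eq ?_)
    congr 1
    apply Finset.sum_congr rfl
    intro v hv
    field_simp
  -- per-ordering bound via the abstract chain rule
  have hmain : ∀ π : Equiv.Perm (Fin n),
      (M.card : ℝ) * alphaLog α (M.card : ℝ) ≤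
        ∑ σ ∈ M, ∑ t : Fin n, alphaLog α (rnkCount A σ π t : ℝ) := by
    intro π
    have hinj : ∀ σ ∈ M, ∀ σ' ∈ M,
        (∀ s < n, σ (π ⟨s % n, Nat.mod_lt s hn⟩) = σ' (π ⟨s % n, Nat.mod_lt s hn⟩)) →
          σ = σ' := by
      intro σ hσ σ' hσ' hag
      apply Equiv.ext
      intro u
      have key := hag (π.symm u).val (π.symm u).isLt
      simp only [Nat.mod_eq_of_lt (π.symm u).isLt, Fin.eta, Equiv.apply_symm_apply] at key
      exact key
    have hCA := claimA (fun k : ℕ => alphaLog α (k : ℝ))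
      (by simp [alphaLog_one]) hKnat n
      (fun s τ => τ (π ⟨s % n, Nat.mod_lt s hn⟩)) M hMne hinj
    refine le_trans hCA ?_
    apply Finset.sum_le_sum
    intro σ hσ
    rw [← Fin.sum_univ_eq_sum_range]
    apply Finset.sum_le_sum
    intro t _
    exact alphaLog_nat_mono hα (one_le_nextCount _ _ _ hσ)
      (nextCount_le_rnkCount hn A M (fun τ hτ => (hMmem τ).mp hτ) π σ hσ t)
  -- row sets and their cardinalities
  have hRcard : ∀ σ ∈ M, ∀ i : Fin n,
      (Finset.univ.filter (fun u => A i (σ u) = 1)).card = r i := by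
    intro σ hσ i
    rw [hr i]
    apply Finset.card_bij' (fun u _ => σ u) (fun j _ => σ.symm j)
    · intro u hu
      simp only [Finset.mem_filter, Finset.mem_univ, true_and] at hu ⊢
      exact hu
    · intro j hj
      simp only [Finset.mem_filter, Finset.mem_univ, true_and] at hj ⊢
      rwa [Equiv.apply_symm_apply]
    · intro u _; simp
    · intro j _; simp
  have hiR : ∀ σ ∈ M, ∀ i : Fin n,
      i ∈ Finset.univ.filter (fun u => A i (σ u) = 1) := by
    intro σ hσ i
    exact Finset.mem_filter.mpr ⟨Finset.mem_univ _, (hMmem σ).mp hσ i⟩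
  -- reindexing the double sum
  have hreidx : ∀ σ ∈ M,
      ∑ π : Equiv.Perm (Fin n), ∑ t : Fin n, alphaLog α (rnkCount A σ π t : ℝ)
        = ∑ i : Fin n, ∑ p : Equiv.Perm (Fin n),
            alphaLog α ((((Finset.univ.filter (fun u => A i (σ u) = 1))).filter
              (fun u => p i ≤ p u)).card : ℝ) := by
    intro σ hσ
    have h1 : ∀ π : Equiv.Perm (Fin n),
        ∑ t : Fin n, alphaLog α (rnkCount A σ π t : ℝ)
          = ∑ i : Fin n, alphaLog α ((((Finset.univ.filter (fun u => A i (σ u) = 1))).filter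
              (fun u => π.symm i ≤ π.symm u)).card : ℝ) := by
      intro π
      rw [← Equiv.sum_comp π.symm (fun t => alphaLog α (rnkCount A σ π t : ℝ))]
      apply Finset.sum_congr rfl
      intro i _
      rw [rnk_eq]
    rw [Finset.sum_congr rfl (fun π _ => h1 π), Finset.sum_comm]
    apply Finset.sum_congr rfl
    intro i _
    rw [← Equiv.sum_comp (Equiv.inv (Equiv.Perm (Fin n)))
      (fun p : Equiv.Perm (Fin n) => alphaLog α
        ((((Finset.univ.filter (fun u => A i (σ u) = 1))).filter
          (fun u => p i ≤ p u)).card : ℝ))]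
    rfl
  -- counting lemma applied
  have hcount : ∀ σ ∈ M, ∀ i : Fin n,
      ∑ p : Equiv.Perm (Fin n),
        alphaLog α ((((Finset.univ.filter (fun u => A i (σ u) = 1))).filter
          (fun u => p i ≤ p u)).card : ℝ)
      = (Fintype.card (Equiv.Perm (Fin n)) : ℝ) *
          ((1 / (r i : ℝ)) * ∑ k ∈ Finset.Icc 1 (r i), alphaLog α (k : ℝ)) := by
    intro σ hσ i
    have h := countL (Finset.univ.filter (fun u => A i (σ u) = 1)) (hiR σ hσ i)
      (fun k => alphaLog α (k : ℝ))
    rw [hRcard σ hσ i] at h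
    have hr' : ((r i : ℕ) : ℝ) ≠ 0 := Nat.cast_ne_zero.mpr (hr0 i)
    have h2 : ∑ p : Equiv.Perm (Fin n),
        alphaLog α ((((Finset.univ.filter (fun u => A i (σ u) = 1))).filter
          (fun u => p i ≤ p u)).card : ℝ)
        = ((Fintype.card (Equiv.Perm (Fin n)) : ℝ) *
            ∑ k ∈ Finset.Icc 1 (r i), alphaLog α (k : ℝ)) / (r i : ℝ) := by
      rw [eq_div_iff hr']
      linear_combination h
    rw [h2]
    ring
  -- assemble everything
  have hNpos : (0:ℝ) < (M.card : ℝ) := by exact_mod_cast hMne.card_pos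
  have hfac : (0:ℝ) < (Fintype.card (Equiv.Perm (Fin n)) : ℝ) := by
    exact_mod_cast Fintype.card_pos
  have hbig : (Fintype.card (Equiv.Perm (Fin n)) : ℝ) *
      ((M.card : ℝ) * alphaLog α (M.card : ℝ))
      ≤ (Fintype.card (Equiv.Perm (Fin n)) : ℝ) * ((M.card : ℝ) *
          (∑ i, (1 / (r i : ℝ)) * ∑ j ∈ Finset.Icc 1 (r i), alphaLog α (j : ℝ))) := by
    calc (Fintype.card (Equiv.Perm (Fin n)) : ℝ) *
        ((M.card : ℝ) * alphaLog α (M.card : ℝ))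
        = ∑ _π : Equiv.Perm (Fin n), (M.card : ℝ) * alphaLog α (M.card : ℝ) := by
          rw [Finset.sum_const, Finset.card_univ, nsmul_eq_mul]
      _ ≤ ∑ π : Equiv.Perm (Fin n), ∑ σ ∈ M, ∑ t : Fin n,
            alphaLog α (rnkCount A σ π t : ℝ) :=
          Finset.sum_le_sum (fun π _ => hmain π)
      _ = ∑ σ ∈ M, ∑ π : Equiv.Perm (Fin n), ∑ t : Fin n,
            alphaLog α (rnkCount A σ π t : ℝ) := Finset.sum_comm
      _ = ∑ σ ∈ M, ∑ i : Fin n, ∑ p : Equiv.Perm (Fin n),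
            alphaLog α ((((Finset.univ.filter (fun u => A i (σ u) = 1))).filter
              (fun u => p i ≤ p u)).card : ℝ) :=
          Finset.sum_congr rfl (fun σ hσ => hreidx σ hσ)
      _ = ∑ σ ∈ M, ∑ i : Fin n, (Fintype.card (Equiv.Perm (Fin n)) : ℝ) *
            ((1 / (r i : ℝ)) * ∑ k ∈ Finset.Icc 1 (r i), alphaLog α (k : ℝ)) :=
          Finset.sum_congr rfl (fun σ hσ =>
            Finset.sum_congr rfl (fun i _ => hcount σ hσ i))
      _ = ∑ _σ ∈ M, (Fintype.card (Equiv.Perm (Fin n)) : ℝ) *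
            (∑ i, (1 / (r i : ℝ)) * ∑ j ∈ Finset.Icc 1 (r i), alphaLog α (j : ℝ)) := by
          apply Finset.sum_congr rfl
          intro σ _
          rw [Finset.mul_sum]
      _ = (M.card : ℝ) * ((Fintype.card (Equiv.Perm (Fin n)) : ℝ) *
            (∑ i, (1 / (r i : ℝ)) * ∑ j ∈ Finset.Icc 1 (r i), alphaLog α (j : ℝ))) := by
          rw [Finset.sum_const, nsmul_eq_mul]
      _ = (Fintype.card (Equiv.Perm (Fin n)) : ℝ) * ((M.card : ℝ) *
            (∑ i, (1 / (r i : ℝ)) * ∑ j ∈ Finset.Icc 1 (r i), alphaLog α (j : ℝ))) := by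
          ring
  have h2 := le_of_mul_le_mul_left hbig hfac
  have h3 := le_of_mul_le_mul_left h2 hNpos
  rw [hperm]
  exact h3
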